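/- Let p ∈ (1,2], δ > 0, and S(D) = (δ + |D^{sym}|)^(p-2) D^{sym}. Then each partial derivative of S satisfies the growth bound |∂S_{ij}/∂D_{kl}(D)| ≤ (3 - p)(δ + |D^{sym}|)^(p-2) for all 2×2 matrices D. -/

import Mathlib

/-- Frobenius norm of a 2×2 real matrix. -/
noncomputable def frob (A : Fin 2 → Fin 2 → ℝ) : ℝ :=
  Real.sqrt (∑ i, ∑ j, (A i j) ^ 2)

/-- Symmetric part `D^sym = (D + Dᵀ)/2`. -/
noncomputable def symPart (D : Fin 2 → Fin 2 → ℝ) : Fin 2 → Fin 2 → ℝ :=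
  fun i j => (D i j + D j i) / 2

/-- The stress tensor viewed as a map on all 2×2 matrices,
`S(D) = (δ + |D^sym|)^(p-2) D^sym`. -/
noncomputable def stressSsym (δ p : ℝ) (D : Fin 2 → Fin 2 → ℝ) : Fin 2 → Fin 2 → ℝ :=
  fun i j => (δ + frob (symPart D)) ^ (p - 2) * symPart D i j

/-- The elementary matrix with a `1` in position `(k,l)`. -/
def elemMatrix (k l : Fin 2) : Fin 2 → Fin 2 → ℝ :=
  fun k' l' => if k' = k then (if l' = l then 1 else 0) else 0

/- ### Auxiliary machinery -/

noncomputable def evalL (i j : Fin 2) : (Fin 2 → Fin 2 → ℝ) →L[ℝ] ℝ :=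
  (ContinuousLinearMap.proj j : (Fin 2 → ℝ) →L[ℝ] ℝ).comp
    (ContinuousLinearMap.proj i : (Fin 2 → Fin 2 → ℝ) →L[ℝ] (Fin 2 → ℝ))

noncomputable def sPartL (i j : Fin 2) : (Fin 2 → Fin 2 → ℝ) →L[ℝ] ℝ :=
  (2⁻¹ : ℝ) • (evalL i j + evalL j i)

lemma sPartL_apply (i j : Fin 2) (E : Fin 2 → Fin 2 → ℝ) : sPartL i j E = symPart E i j := by
  simp [sPartL, evalL, symPart]; ring

lemma abs_entry_le (i j : Fin 2) (E : Fin 2 → Fin 2 → ℝ) : |E i j| ≤ ‖E‖ := by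
  have h1 : ‖E i j‖ ≤ ‖E i‖ := norm_le_pi_norm (E i) j
  have h2 : ‖E i‖ ≤ ‖E‖ := norm_le_pi_norm E i
  simpa using h1.trans h2

lemma sPartL_bound (i j : Fin 2) (E : Fin 2 → Fin 2 → ℝ) : |sPartL i j E| ≤ ‖E‖ := by
  rw [sPartL_apply]
  have := abs_entry_le i j E
  have := abs_entry_le j i E
  show |(E i j + E j i)/2| ≤ ‖E‖
  calc |(E i j + E j i)/2| ≤ (|E i j| + |E j i|)/2 := by
        rw [abs_div]; simp only [abs_two]; gcongr; exact abs_add_le _ _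
    _ ≤ ‖E‖ := by linarith

noncomputable def Qf (D : Fin 2 → Fin 2 → ℝ) : ℝ := ∑ m, ∑ n, (symPart D m n)^2

noncomputable def Qder (D : Fin 2 → Fin 2 → ℝ) : (Fin 2 → Fin 2 → ℝ) →L[ℝ] ℝ :=
  ∑ m, ∑ n, (2 * symPart D m n) • sPartL m n

lemma hQ (D : Fin 2 → Fin 2 → ℝ) : HasFDerivAt Qf (Qder D) D := by
  have h : ∀ m n : Fin 2, HasFDerivAt (fun D' => (sPartL m n D')^2)
      ((2 * symPart D m n) • (sPartL m n : (Fin 2 → Fin 2 → ℝ) →L[ℝ] ℝ)) D := by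
    intro m n
    have h1 := ((sPartL m n).hasFDerivAt (x := D)).mul ((sPartL m n).hasFDerivAt (x := D))
    have : (fun D' => sPartL m n D' * sPartL m n D') = fun D' => (sPartL m n D')^2 := by
      funext D'; ring
    rw [show ((sPartL m n : (Fin 2 → Fin 2 → ℝ) → ℝ) * sPartL m n) = fun D' => sPartL m n D' * sPartL m n D' from rfl, this] at h1
    refine h1.congr_fderiv ?_
    rw [sPartL_apply, two_mul, add_smul]
  have h2 : HasFDerivAt (fun D' => ∑ m, ∑ n, (sPartL m n D')^2) (Qder D) D := by
    unfold Qder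
    apply HasFDerivAt.fun_sum; intro m _
    exact HasFDerivAt.fun_sum (fun n _ => h m n)
  have : Qf = fun D' => ∑ m, ∑ n, (sPartL m n D')^2 := by
    funext D'; unfold Qf; simp [sPartL_apply]
  rw [this]; exact h2

lemma Qder_apply (D E : Fin 2 → Fin 2 → ℝ) :
    Qder D E = ∑ m, ∑ n, 2 * symPart D m n * symPart E m n := by
  unfold Qder
  simp [ContinuousLinearMap.sum_apply, sPartL_apply, smul_eq_mul, mul_assoc]

lemma frob_eq (D : Fin 2 → Fin 2 → ℝ) : frob (symPart D) = Real.sqrt (Qf D) := rfl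

lemma Qf_nonneg (D : Fin 2 → Fin 2 → ℝ) : 0 ≤ Qf D := by
  unfold Qf; positivity

lemma entry_sq_le (D : Fin 2 → Fin 2 → ℝ) (i j : Fin 2) : (symPart D i j)^2 ≤ Qf D := by
  unfold Qf
  have h2 : (symPart D i j)^2 ≤ ∑ n, (symPart D i n)^2 :=
    Finset.single_le_sum (f := fun n => (symPart D i n)^2) (fun n _ => sq_nonneg _)
      (Finset.mem_univ j)
  exact h2.trans (Finset.single_le_sum (f := fun m => ∑ n, (symPart D m n)^2)
    (fun m _ => Finset.sum_nonneg fun n _ => sq_nonneg _) (Finset.mem_univ i))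

lemma entry_le_sqrtQ (D : Fin 2 → Fin 2 → ℝ) (i j : Fin 2) :
    |symPart D i j| ≤ Real.sqrt (Qf D) := by
  have h1 : (symPart D i j)^2 ≤ Qf D := entry_sq_le D i j
  calc |symPart D i j| = Real.sqrt ((symPart D i j)^2) := (Real.sqrt_sq_eq_abs _).symm
    _ ≤ Real.sqrt (Qf D) := Real.sqrt_le_sqrt h1

lemma Qf_pos (D : Fin 2 → Fin 2 → ℝ) (hD : symPart D ≠ 0) : 0 < Qf D := by
  rcases (Qf_nonneg D).lt_or_eq with h | h
  · exact h
  · exfalso; apply hD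
    funext i j
    have h1 : (symPart D i j)^2 ≤ Qf D := entry_sq_le D i j
    have h2 : (symPart D i j)^2 = 0 := le_antisymm (by rw [← h] at h1; exact h1) (sq_nonneg _)
    simpa using pow_eq_zero_iff two_ne_zero |>.mp h2

lemma symPart_elem_bound (k l i j : Fin 2) : |symPart (elemMatrix k l) i j| ≤ 1 := by
  unfold symPart elemMatrix
  split_ifs <;> rw [abs_le] <;> constructor <;> norm_num

/-- value of `Qder` at an elementary matrix -/
lemma Qder_elem (D : Fin 2 → Fin 2 → ℝ) (k l : Fin 2) :
    Qder D (elemMatrix k l) = symPart D k l + symPart D l k := by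
  rw [Qder_apply]
  fin_cases k <;> fin_cases l <;>
    simp [Fin.sum_univ_two, symPart, elemMatrix] <;> ring

/-- Component derivative in the case `symPart D ≠ 0`. -/
lemma comp_deriv_ne (δ p : ℝ) (hδ : 0 < δ) (D : Fin 2 → Fin 2 → ℝ) (hD : symPart D ≠ 0)
    (i j : Fin 2) :
    HasFDerivAt (fun D' => stressSsym δ p D' i j)
      (((δ + Real.sqrt (Qf D)) ^ (p-2)) • sPartL i j
        + (symPart D i j) •
          (((p-2) * (δ + Real.sqrt (Qf D))^(p-3) * (1/(2*Real.sqrt (Qf D)))) • Qder D)) D := by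
  have hu : 0 < Qf D := Qf_pos D hD
  have hpos : (0:ℝ) < δ + Real.sqrt (Qf D) := by positivity
  have hg : HasDerivAt (fun t => (δ + Real.sqrt t) ^ (p-2))
      ((p-2) * (δ + Real.sqrt (Qf D))^(p-3) * (1/(2*Real.sqrt (Qf D)))) (Qf D) := by
    have h1 : HasDerivAt (fun t => δ + Real.sqrt t) (1/(2*Real.sqrt (Qf D))) (Qf D) :=
      (Real.hasDerivAt_sqrt hu.ne').const_add δ
    have h2 : HasDerivAt (fun x : ℝ => x ^ (p-2)) ((p-2) * (δ + Real.sqrt (Qf D))^(p-2-1))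
        (δ + Real.sqrt (Qf D)) := Real.hasDerivAt_rpow_const (Or.inl hpos.ne')
    have := h2.comp (Qf D) h1
    refine this.congr_deriv ?_
    rw [show p - 2 - 1 = p - 3 by ring]
  have hφ : HasFDerivAt (fun D' => (δ + Real.sqrt (Qf D')) ^ (p-2))
      (((p-2) * (δ + Real.sqrt (Qf D))^(p-3) * (1/(2*Real.sqrt (Qf D)))) • Qder D) D :=
    hg.comp_hasFDerivAt D (hQ D)
  have hmul := hφ.mul ((sPartL i j).hasFDerivAt (x := D))
  have heq : (fun D' => (δ + Real.sqrt (Qf D')) ^ (p-2) * sPartL i j D')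
      = fun D' => stressSsym δ p D' i j := by
    funext D'
    rw [sPartL_apply]
    simp [stressSsym, frob_eq]
  rw [show ((fun D' => (δ + Real.sqrt (Qf D')) ^ (p-2)) * ⇑(sPartL i j)) = fun D' => (δ + Real.sqrt (Qf D')) ^ (p-2) * sPartL i j D' from rfl, heq] at hmul
  refine hmul.congr_fderiv ?_
  rw [sPartL_apply]

/-- Component derivative in the case `symPart D = 0`. -/
lemma comp_deriv_zero (δ p : ℝ) (hδ : 0 < δ) (D : Fin 2 → Fin 2 → ℝ) (h0 : symPart D = 0)
    (i j : Fin 2) :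
    HasFDerivAt (fun D' => stressSsym δ p D' i j) ((δ ^ (p-2)) • sPartL i j) D := by
  have hQ0 : Qf D = 0 := by unfold Qf; rw [h0]; simp
  have hφcont : ContinuousAt (fun D' => (δ + Real.sqrt (Qf D')) ^ (p-2)) D := by
    have hc : ContinuousAt Qf D := (hQ D).differentiableAt.continuousAt
    have : ContinuousAt (fun D' => δ + Real.sqrt (Qf D')) D :=
      continuousAt_const.add (Real.continuous_sqrt.continuousAt.comp hc)
    exact this.rpow_const (Or.inl (by simpa [hQ0] using hδ.ne'))
  rw [hasFDerivAt_iff_isLittleO_nhds_zero]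
  have key : ∀ h : Fin 2 → Fin 2 → ℝ,
      stressSsym δ p (D + h) i j - stressSsym δ p D i j - ((δ ^ (p-2)) • sPartL i j) h
      = ((δ + Real.sqrt (Qf (D + h))) ^ (p-2) - δ ^ (p-2)) * symPart h i j := by
    intro h
    have hsym : symPart (D + h) = symPart h := by
      funext a b
      have : symPart D a b = 0 := by rw [h0]; rfl
      simp [symPart] at this ⊢
      linarith
    have hQeq : Qf (D + h) = Qf h := by unfold Qf; rw [hsym]
    have hD0 : symPart D i j = 0 := by rw [h0]; rfl
    simp only [stressSsym, frob_eq, hsym, hQeq, hD0, hQ0, Real.sqrt_zero, add_zero,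
      mul_zero, sub_zero, ContinuousLinearMap.coe_smul', Pi.smul_apply, sPartL_apply,
      smul_eq_mul]
    ring
  have hf0 : Filter.Tendsto (fun h : Fin 2 → Fin 2 → ℝ =>
      (δ + Real.sqrt (Qf (D + h))) ^ (p-2) - δ ^ (p-2)) (nhds 0) (nhds 0) := by
    have h1 : Filter.Tendsto (fun h : Fin 2 → Fin 2 → ℝ => D + h) (nhds 0) (nhds D) := by
      exact (continuous_add_left D).tendsto' 0 D (by simp)
    have h2 := hφcont.tendsto.comp h1
    have : ((δ + Real.sqrt (Qf D)) ^ (p-2) : ℝ) = δ ^ (p-2) := by rw [hQ0]; simp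
    rw [this] at h2
    simpa using h2.sub_const (δ ^ (p-2))
  rw [Asymptotics.isLittleO_iff]
  intro c hc
  have hev : ∀ᶠ h in nhds (0 : Fin 2 → Fin 2 → ℝ),
      |(δ + Real.sqrt (Qf (D + h))) ^ (p-2) - δ ^ (p-2)| ≤ c := by
    have := hf0.eventually (Metric.ball_mem_nhds (0:ℝ) hc)
    filter_upwards [this] with h hh
    have : dist ((δ + Real.sqrt (Qf (D + h))) ^ (p-2) - δ ^ (p-2)) 0 < c := hh
    rw [Real.dist_eq, sub_zero] at this
    exact this.le
  filter_upwards [hev] with h hh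
  rw [key h]
  have hb : |symPart h i j| ≤ ‖h‖ := by rw [← sPartL_apply]; exact sPartL_bound i j h
  calc ‖((δ + Real.sqrt (Qf (D + h))) ^ (p-2) - δ ^ (p-2)) * symPart h i j‖
      = |(δ + Real.sqrt (Qf (D + h))) ^ (p-2) - δ ^ (p-2)| * |symPart h i j| := by
        rw [Real.norm_eq_abs, abs_mul]
    _ ≤ c * ‖h‖ := by
        apply mul_le_mul hh hb (abs_nonneg _)
        exact hc.le

lemma fderiv_comp_eval (f : (Fin 2 → Fin 2 → ℝ) → (Fin 2 → Fin 2 → ℝ))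
    (D : Fin 2 → Fin 2 → ℝ) (hf : DifferentiableAt ℝ f D) (i j : Fin 2)
    (L : (Fin 2 → Fin 2 → ℝ) →L[ℝ] ℝ) (hL : HasFDerivAt (fun D' => f D' i j) L D)
    (e : Fin 2 → Fin 2 → ℝ) : (fderiv ℝ f D e) i j = L e := by
  have h1 : HasFDerivAt (fun D' => f D' i j) ((evalL i j).comp (fderiv ℝ f D)) D :=
    (evalL i j).hasFDerivAt.comp D hf.hasFDerivAt
  have h2 := h1.unique hL
  rw [← h2]; rfl

/-- Growth of the derivative of the stress tensor: for `δ > 0`, `p ∈ (1,2]` and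
every 2×2 matrix `D`, each partial derivative satisfies
`|∂S_ij/∂D_kl (D)| ≤ (3 - p)(δ + |D^sym|)^(p-2)`. -/
theorem stress_derivative_growth (δ p : ℝ) (hδ : 0 < δ) (hp1 : 1 < p) (hp2 : p ≤ 2)
    (D : Fin 2 → Fin 2 → ℝ) :
    ∀ i j k l : Fin 2,
      |(fderiv ℝ (stressSsym δ p) D (elemMatrix k l)) i j| ≤
        (3 - p) * (δ + frob (symPart D)) ^ (p - 2) := by
  intro i j k l
  by_cases h0 : symPart D = 0
  · -- zero case
    have hdiff : DifferentiableAt ℝ (stressSsym δ p) D := by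
      rw [differentiableAt_pi]; intro i'
      rw [differentiableAt_pi]; intro j'
      exact (comp_deriv_zero δ p hδ D h0 i' j').differentiableAt
    have hval := fderiv_comp_eval (stressSsym δ p) D hdiff i j _
      (comp_deriv_zero δ p hδ D h0 i j) (elemMatrix k l)
    rw [hval]
    have hfr : frob (symPart D) = 0 := by
      rw [frob_eq]
      have : Qf D = 0 := by unfold Qf; rw [h0]; simp
      rw [this, Real.sqrt_zero]
    rw [hfr, add_zero]
    have hB : |symPart (elemMatrix k l) i j| ≤ 1 := symPart_elem_bound k l i j
    have hδp : (0:ℝ) < δ ^ (p-2) := Real.rpow_pos_of_pos hδ _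
    calc |((δ ^ (p-2)) • sPartL i j) (elemMatrix k l)|
        = δ ^ (p-2) * |symPart (elemMatrix k l) i j| := by
          simp [sPartL_apply, abs_mul, abs_of_pos hδp]
      _ ≤ δ ^ (p-2) * 1 := by gcongr
      _ ≤ (3-p) * δ ^ (p-2) := by nlinarith
  · -- nonzero case
    have hdiff : DifferentiableAt ℝ (stressSsym δ p) D := by
      rw [differentiableAt_pi]; intro i'
      rw [differentiableAt_pi]; intro j'
      exact (comp_deriv_ne δ p hδ D h0 i' j').differentiableAt
    have hval := fderiv_comp_eval (stressSsym δ p) D hdiff i j _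
      (comp_deriv_ne δ p hδ D h0 i j) (elemMatrix k l)
    rw [hval]
    set n := Real.sqrt (Qf D) with hn
    have hu : 0 < Qf D := Qf_pos D h0
    have hnpos : 0 < n := Real.sqrt_pos.mpr hu
    have hfr : frob (symPart D) = n := frob_eq D
    rw [hfr]
    have hpos : (0:ℝ) < δ + n := by positivity
    have hP3 : (0:ℝ) < (δ + n) ^ (p-3) := Real.rpow_pos_of_pos hpos _
    have hP2 : (0:ℝ) < (δ + n) ^ (p-2) := Real.rpow_pos_of_pos hpos _
    have hsplit : (δ + n) ^ (p-2) = (δ + n) ^ (p-3) * (δ + n) := by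
      rw [← Real.rpow_add_one hpos.ne' (p-3)]
      congr 1; ring
    have hAij : |symPart D i j| ≤ n := entry_le_sqrtQ D i j
    have hAkl : |symPart D k l| ≤ n := entry_le_sqrtQ D k l
    have hAlk : |symPart D l k| ≤ n := entry_le_sqrtQ D l k
    have hB : |symPart (elemMatrix k l) i j| ≤ 1 := symPart_elem_bound k l i j
    have happ : (((δ + n) ^ (p-2)) • sPartL i j
        + (symPart D i j) • (((p-2) * (δ + n)^(p-3) * (1/(2*n))) • Qder D)) (elemMatrix k l)
        = (δ + n) ^ (p-2) * symPart (elemMatrix k l) i j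
          + symPart D i j * ((p-2) * (δ + n)^(p-3) * (1/(2*n))
              * (symPart D k l + symPart D l k)) := by
      simp only [ContinuousLinearMap.add_apply, ContinuousLinearMap.coe_smul', Pi.smul_apply,
        sPartL_apply, Qder_elem, smul_eq_mul]
    rw [happ]
    have hT : |symPart D k l + symPart D l k| ≤ 2 * n := by
      calc |symPart D k l + symPart D l k| ≤ |symPart D k l| + |symPart D l k| := abs_add_le _ _
        _ ≤ 2 * n := by linarith
    -- bound the two terms
    have hterm2 : |(δ + n) ^ (p-2) * symPart (elemMatrix k l) i j| ≤ (δ + n) ^ (p-2) := by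
      rw [abs_mul, abs_of_pos hP2]
      nlinarith
    have hterm1 : |symPart D i j * ((p-2) * (δ + n)^(p-3) * (1/(2*n))
        * (symPart D k l + symPart D l k))| ≤ (2-p) * (δ + n) ^ (p-2) := by
      rw [abs_mul, abs_mul, abs_mul, abs_mul]
      have h1 : |p-2| = 2-p := by rw [abs_of_nonpos (by linarith)]; ring
      have h2 : |(δ + n)^(p-3)| = (δ + n)^(p-3) := abs_of_pos hP3
      have h3 : |1/(2*n)| = 1/(2*n) := abs_of_pos (by positivity)
      rw [h1, h2, h3]
      have h2p : (0:ℝ) ≤ 2 - p := by linarith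
      have hC : (0:ℝ) ≤ (2-p) * (δ + n)^(p-3) * (1/(2*n)) :=
        mul_nonneg (mul_nonneg h2p hP3.le) (by positivity)
      have h4 : (2-p) * (δ + n)^(p-3) * (1/(2*n)) * |symPart D k l + symPart D l k|
          ≤ (2-p) * (δ + n)^(p-3) * (1/(2*n)) * (2*n) := mul_le_mul_of_nonneg_left hT hC
      have h5 : (0:ℝ) ≤ (2-p) * (δ + n)^(p-3) * (1/(2*n)) * |symPart D k l + symPart D l k| :=
        mul_nonneg hC (abs_nonneg _)
      have key : |symPart D i j| * ((2-p) * (δ + n)^(p-3) * (1/(2*n))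
          * |symPart D k l + symPart D l k|) ≤ n * ((2-p) * (δ + n)^(p-3) * (1/(2*n)) * (2*n)) := by
        nlinarith [abs_nonneg (symPart D i j)]
      calc |symPart D i j| * ((2-p) * (δ + n)^(p-3) * (1/(2*n)) * |symPart D k l + symPart D l k|)
          ≤ n * ((2-p) * (δ + n)^(p-3) * (1/(2*n)) * (2*n)) := key
        _ = (2-p) * ((δ + n)^(p-3) * n) := by field_simp
        _ ≤ (2-p) * ((δ + n)^(p-3) * (δ + n)) := by
            have h6 : (δ + n)^(p-3) * n ≤ (δ + n)^(p-3) * (δ + n) :=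
              mul_le_mul_of_nonneg_left (by linarith) hP3.le
            exact mul_le_mul_of_nonneg_left h6 h2p
        _ = (2-p) * (δ + n) ^ (p-2) := by rw [hsplit]
    calc |(δ + n) ^ (p-2) * symPart (elemMatrix k l) i j
          + symPart D i j * ((p-2) * (δ + n)^(p-3) * (1/(2*n))
              * (symPart D k l + symPart D l k))|
        ≤ |(δ + n) ^ (p-2) * symPart (elemMatrix k l) i j|
          + |symPart D i j * ((p-2) * (δ + n)^(p-3) * (1/(2*n))
              * (symPart D k l + symPart D l k))| := abs_add_le _ _
      _ ≤ (δ + n) ^ (p-2) + (2-p) * (δ + n) ^ (p-2) := by linarith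
      _ = (3 - p) * (δ + n) ^ (p-2) := by ring
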